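/- Let Ω be a nonempty subset of ℝ^n, let L_0, …, L_m : ℝ^n → ℝ, let a ∈ ℝ^{m+1} satisfy a_i < L_i(x) for all x ∈ Ω and all i, let ε > 0, and let k ∈ ℝ^{m+1} satisfy k_i ≥ 0 for all i and Σ_{i=0}^m k_i = 1. If x* ∈ Ω minimizes over Ω the modified weighted Chebyshev objective ψ_{k,ε}(x) = max_{0≤i≤m} k_i [ (L_i(x) − a_i) + ε Σ_{j=0}^m (L_j(x) − a_j) ], then x* is Pareto optimal (not merely weakly Pareto optimal). -/
import Mathlib


/-- A minimizer over `Ω` of the modified weighted Chebyshev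
objective `ψ_{k,ε}(x) = max_i k_i [(L_i(x) - a_i) + ε ∑_j (L_j(x) - a_j)]`
with `ε > 0`, `k_i ≥ 0`, `∑ k_i = 1` is Pareto optimal (not merely weakly
Pareto optimal). -/
theorem modifiedWeightedChebyshev_minimizer_paretoOptimal
    (n m : ℕ) (Ω : Set (Fin n → ℝ))
    (L : Fin (m + 1) → (Fin n → ℝ) → ℝ)
    (a k : Fin (m + 1) → ℝ) (ε : ℝ)
    (hΩ : Ω.Nonempty)
    (ha : ∀ x ∈ Ω, ∀ i, a i < L i x)
    (hε : 0 < ε) (hk : ∀ i, 0 ≤ k i) (hksum : ∑ i, k i = 1)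
    (xstar : Fin n → ℝ) (hxstar : xstar ∈ Ω)
    (hmin : ∀ x ∈ Ω,
      Finset.univ.sup' Finset.univ_nonempty
          (fun i => k i * ((L i xstar - a i) + ε * ∑ j, (L j xstar - a j))) ≤
        Finset.univ.sup' Finset.univ_nonempty
          (fun i => k i * ((L i x - a i) + ε * ∑ j, (L j x - a j)))) :
    ¬ ∃ x' ∈ Ω, (∀ i, L i x' ≤ L i xstar) ∧ ∃ j, L j x' < L j xstar := by
  rintro ⟨x', hx', hle, j0, hlt⟩
  set S' := ∑ j, (L j x' - a j) with hS'
  set S := ∑ j, (L j xstar - a j) with hS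
  have hSlt : S' < S := by
    apply Finset.sum_lt_sum
    · intro i _; linarith [hle i]
    · exact ⟨j0, Finset.mem_univ _, by linarith⟩
  have hSpos : 0 < S := Finset.sum_pos (fun i _ => by linarith [ha xstar hxstar i])
    Finset.univ_nonempty
  obtain ⟨i0, _, hki0⟩ := Finset.exists_ne_zero_of_sum_ne_zero (by rw [hksum]; norm_num)
  have hki0' : 0 < k i0 := (hk i0).lt_of_ne (Ne.symm hki0)
  have hψpos : 0 < Finset.univ.sup' Finset.univ_nonempty
      (fun i => k i * ((L i xstar - a i) + ε * ∑ j, (L j xstar - a j))) := by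
    calc (0:ℝ) < k i0 * ((L i0 xstar - a i0) + ε * S) := by
          apply mul_pos hki0'
          have := ha xstar hxstar i0
          nlinarith
      _ ≤ _ := by rw [hS]; exact Finset.le_sup' (fun i => k i * ((L i xstar - a i) + ε * ∑ j, (L j xstar - a j))) (Finset.mem_univ i0)
  have hstrict : Finset.univ.sup' Finset.univ_nonempty
      (fun i => k i * ((L i x' - a i) + ε * ∑ j, (L j x' - a j))) <
      Finset.univ.sup' Finset.univ_nonempty
      (fun i => k i * ((L i xstar - a i) + ε * ∑ j, (L j xstar - a j))) := by
    rw [Finset.sup'_lt_iff]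
    intro i _
    rcases eq_or_lt_of_le (hk i) with h0 | hpos
    · rw [← h0]; simpa using hψpos
    · calc k i * ((L i x' - a i) + ε * S') < k i * ((L i xstar - a i) + ε * S) := by
            apply mul_lt_mul_of_pos_left _ hpos
            have := hle i
            nlinarith
        _ ≤ _ := by rw [hS]; exact Finset.le_sup' (fun i => k i * ((L i xstar - a i) + ε * ∑ j, (L j xstar - a j))) (Finset.mem_univ i)
  exact absurd (hmin x' hx') (not_le.mpr hstrict)
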